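/- Let f : ℝ^{n1×n2} → ℝ be twice continuously differentiable and suppose there are constants 0 < µ ≤ L such that µ‖W‖_F² ≤ D²f(X)[W, W] ≤ L‖W‖_F² for all X, W ∈ ℝ^{n1×n2}, where D²f(X) is the second derivative (Hessian quadratic form) of f at X. Let X⋆ ∈ ℝ^{n1×n2} satisfy ∇f(X⋆) = 0, let B ∈ ℝ^{n1×r} and R ∈ ℝ^{n2×r}, and set X := B Rᵀ, E := X − X⋆, and ε := (L−µ)/(L+µ). Then for every O ∈ ℝ^{n1×r} with ‖O‖_F = 1, ⟨∇f(X) R, O⟩_F ≥ ((µ+L)/2) ( ⟨E, O Rᵀ⟩_F − ε ‖E‖_F ‖O Rᵀ‖_F ); in particular ‖∇f(X) R‖_F ≥ ((µ+L)/2) ( ⟨E, O Rᵀ⟩_F − ε ‖E‖_F ‖O Rᵀ‖_F ) for every such O. -/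

import Mathlib

open Matrix

/-- Frobenius inner product of two real matrices. -/
noncomputable def finner {m n : Type*} [Fintype m] [Fintype n]
    (A B : Matrix m n ℝ) : ℝ := (Aᵀ * B).trace

/-- Frobenius norm of a real matrix. -/
noncomputable def fnorm {m n : Type*} [Fintype m] [Fintype n]
    (A : Matrix m n ℝ) : ℝ := Real.sqrt (finner A A)

attribute [local instance] Matrix.frobeniusNormedAddCommGroup Matrix.frobeniusNormedSpace

section FrobeniusLemmas

variable {m n : Type*} [Fintype m] [Fintype n]

lemma finner_eq_sum (A B : Matrix m n ℝ) :
    finner A B = ∑ j, ∑ i, A i j * B i j := by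
  simp [finner, Matrix.trace, Matrix.mul_apply, Matrix.diag]

lemma finner_comm (A B : Matrix m n ℝ) : finner A B = finner B A := by
  simp only [finner_eq_sum, mul_comm]

lemma finner_add_right (A B C : Matrix m n ℝ) :
    finner A (B + C) = finner A B + finner A C := by
  simp [finner_eq_sum, mul_add, Finset.sum_add_distrib]

lemma finner_add_left (A B C : Matrix m n ℝ) :
    finner (A + B) C = finner A C + finner B C := by
  simp [finner_eq_sum, add_mul, Finset.sum_add_distrib]

lemma finner_smul_right (t : ℝ) (A B : Matrix m n ℝ) :
    finner A (t • B) = t * finner A B := by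
  simp [finner_eq_sum, Matrix.smul_apply, Finset.mul_sum, mul_left_comm]

lemma finner_smul_left (t : ℝ) (A B : Matrix m n ℝ) :
    finner (t • A) B = t * finner A B := by
  rw [finner_comm, finner_smul_right, finner_comm]

lemma finner_neg_left (A B : Matrix m n ℝ) : finner (-A) B = - finner A B := by
  have := finner_smul_left (-1 : ℝ) A B; simpa using this

lemma finner_sub_left (A B C : Matrix m n ℝ) :
    finner (A - B) C = finner A C - finner B C := by
  rw [sub_eq_add_neg, finner_add_left, finner_neg_left]; ring

lemma finner_zero_left (B : Matrix m n ℝ) : finner 0 B = 0 := by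
  simp [finner_eq_sum]

lemma finner_self_nonneg (A : Matrix m n ℝ) : 0 ≤ finner A A := by
  rw [finner_eq_sum]
  exact Finset.sum_nonneg fun j _ => Finset.sum_nonneg fun i _ => mul_self_nonneg _

lemma fnorm_nonneg (A : Matrix m n ℝ) : 0 ≤ fnorm A := Real.sqrt_nonneg _

lemma fnorm_sq (A : Matrix m n ℝ) : fnorm A ^ 2 = finner A A := by
  rw [fnorm, Real.sq_sqrt (finner_self_nonneg A)]

lemma eq_zero_of_fnorm_eq_zero {A : Matrix m n ℝ} (h : fnorm A = 0) : A = 0 := by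
  have h2 : finner A A = 0 := by
    have := fnorm_sq A; rw [h] at this; simpa using this.symm
  rw [finner_eq_sum] at h2
  ext i j
  have h3 : ∀ j' ∈ Finset.univ, (0:ℝ) ≤ ∑ i', A i' j' * A i' j' :=
    fun j' _ => Finset.sum_nonneg fun i' _ => mul_self_nonneg _
  have h4 := (Finset.sum_eq_zero_iff_of_nonneg h3).1 h2 j (Finset.mem_univ j)
  have h5 := (Finset.sum_eq_zero_iff_of_nonneg
    (fun i' _ => mul_self_nonneg (A i' j))).1 h4 i (Finset.mem_univ i)
  have := mul_self_eq_zero.1 h5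
  simpa using this

lemma fnorm_neg (A : Matrix m n ℝ) : fnorm (-A) = fnorm A := by
  have : finner (-A) (-A) = finner A A := by
    rw [finner_neg_left, finner_comm, finner_neg_left, finner_comm]; ring
  rw [fnorm, fnorm, this]

lemma finner_le_fnorm_mul_fnorm (A B : Matrix m n ℝ) :
    finner A B ≤ fnorm A * fnorm B := by
  have key : finner A B ^ 2 ≤ finner A A * finner B B := by
    classical
    have h1 : finner A B = ∑ p : m × n, A p.1 p.2 * B p.1 p.2 := by
      rw [finner_eq_sum, Finset.sum_comm]
      rw [Fintype.sum_prod_type]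
    have h2 : finner A A = ∑ p : m × n, (A p.1 p.2) ^ 2 := by
      rw [finner_eq_sum, Finset.sum_comm, Fintype.sum_prod_type]
      simp [sq]
    have h3 : finner B B = ∑ p : m × n, (B p.1 p.2) ^ 2 := by
      rw [finner_eq_sum, Finset.sum_comm, Fintype.sum_prod_type]
      simp [sq]
    rw [h1, h2, h3]
    exact Finset.sum_mul_sq_le_sq_mul_sq _ _ _
  have hb : fnorm A * fnorm B = Real.sqrt (finner A A * finner B B) := by
    rw [fnorm, fnorm, Real.sqrt_mul (finner_self_nonneg A)]
  rw [hb]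
  calc finner A B ≤ |finner A B| := le_abs_self _
    _ = Real.sqrt (finner A B ^ 2) := (Real.sqrt_sq_eq_abs _).symm
    _ ≤ Real.sqrt (finner A A * finner B B) := Real.sqrt_le_sqrt key

lemma finner_mul_right {r : Type*} [Fintype r] (G : Matrix m n ℝ)
    (R : Matrix n r ℝ) (O : Matrix m r ℝ) :
    finner (G * R) O = finner G (O * Rᵀ) := by
  unfold finner
  rw [Matrix.transpose_mul, Matrix.mul_assoc, Matrix.trace_mul_comm,
    Matrix.mul_assoc]

lemma fnorm_zero : fnorm (0 : Matrix m n ℝ) = 0 := by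
  rw [fnorm, finner_zero_left, Real.sqrt_zero]


lemma fnorm_smul (t : ℝ) (A : Matrix m n ℝ) : fnorm (t • A) = |t| * fnorm A := by
  have h : finner (t • A) (t • A) = t ^ 2 * finner A A := by
    rw [finner_smul_left, finner_comm, finner_smul_left]; ring
  rw [fnorm, h, Real.sqrt_mul (sq_nonneg t), Real.sqrt_sq_eq_abs, fnorm]

lemma fnorm_parallelogram (U V : Matrix m n ℝ) :
    fnorm (U + V) ^ 2 + fnorm (U - V) ^ 2 = 2 * fnorm U ^ 2 + 2 * fnorm V ^ 2 := by
  have hsub : U - V = U + (-1 : ℝ) • V := by module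
  rw [fnorm_sq, fnorm_sq, fnorm_sq, fnorm_sq, hsub]
  simp only [finner_add_left, finner_add_right, finner_smul_left, finner_smul_right]
  rw [finner_comm V U]
  ring

lemma bilin_le {d : ℝ} (P : Matrix m n ℝ → Matrix m n ℝ → ℝ)
    (hadd : ∀ U V W, P (U + V) W = P U W + P V W)
    (hsmul : ∀ (t : ℝ) V W, P (t • V) W = t * P V W)
    (hsymm : ∀ V W, P V W = P W V)
    (hbnd : ∀ W, |P W W| ≤ d * fnorm W ^ 2)
    (E W : Matrix m n ℝ) : P E W ≤ d * fnorm E * fnorm W := by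
  have hzero : ∀ W, P 0 W = 0 := by
    intro W
    have := hsmul 0 0 W; simpa using this
  rcases eq_or_ne (fnorm E) 0 with hA | hA
  · rw [eq_zero_of_fnorm_eq_zero hA, hzero, fnorm_zero]; simp
  rcases eq_or_ne (fnorm W) 0 with hB | hB
  · rw [eq_zero_of_fnorm_eq_zero hB, hsymm, hzero, fnorm_zero]; simp
  set a := fnorm E with ha
  set b := fnorm W with hb
  have hapos : 0 < a := lt_of_le_of_ne (fnorm_nonneg E) (Ne.symm hA)
  have hbpos : 0 < b := lt_of_le_of_ne (fnorm_nonneg W) (Ne.symm hB)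
  set s : ℝ := a⁻¹
  set t : ℝ := b⁻¹
  have hspos : 0 < s := inv_pos.2 hapos
  have htpos : 0 < t := inv_pos.2 hbpos
  have haddr : ∀ U V W, P W (U + V) = P W U + P W V := by
    intro U V W; rw [hsymm, hadd, hsymm U, hsymm V]
  have hsmulr : ∀ (c : ℝ) V W, P W (c • V) = c * P W V := by
    intro c V W; rw [hsymm, hsmul, hsymm]
  have expand : ∀ (c : ℝ), P (s • E + c • W) (s • E + c • W)
      = s ^ 2 * P E E + 2 * (s * c) * P E W + c ^ 2 * P W W := by
    intro c
    simp only [hadd, haddr, hsmul, hsmulr]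
    rw [hsymm W E]
    ring
  have hnormsE : fnorm (s • E) ^ 2 = 1 := by
    have hsa : s * a = 1 := inv_mul_cancel₀ hapos.ne'
    rw [fnorm_smul, abs_of_pos hspos, ← ha, hsa, one_pow]
  have hnormtW : ∀ c : ℝ, fnorm (c • W) ^ 2 = c ^ 2 * b ^ 2 := by
    intro c; rw [fnorm_smul, mul_pow, sq_abs]
  have key : 4 * (s * t) * P E W ≤ 4 * d := by
    have e1 := expand t
    have e2 := expand (-t)
    have hsub : s • E + (-t) • W = s • E - t • W := by module
    rw [hsub] at e2
    have h1 : P (s • E + t • W) (s • E + t • W) ≤ d * fnorm (s • E + t • W) ^ 2 :=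
      le_trans (le_abs_self _) (hbnd _)
    have h2 : -(d * fnorm (s • E - t • W) ^ 2) ≤ P (s • E - t • W) (s • E - t • W) :=
      neg_le_of_abs_le (hbnd _)
    have hpar := fnorm_parallelogram (s • E) (t • W)
    have hval : fnorm (s • E + t • W) ^ 2 + fnorm (s • E - t • W) ^ 2 = 4 := by
      rw [hpar, hnormsE, hnormtW]
      have htb : t * b = 1 := inv_mul_cancel₀ hbpos.ne'
      have h2 : t ^ 2 * b ^ 2 = 1 := by rw [← mul_pow, htb, one_pow]
      rw [h2]; ring
    have hd4 : d * fnorm (s • E + t • W) ^ 2 + d * fnorm (s • E - t • W) ^ 2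
        = 4 * d := by rw [← mul_add, hval]; ring
    linarith [e1, e2, h1, h2, hd4]
  have hst : s * t = (a * b)⁻¹ := by
    show a⁻¹ * b⁻¹ = (a * b)⁻¹
    rw [mul_inv]
  have h4 : P E W ≤ d / (s * t) := by
    have hstpos : 0 < s * t := mul_pos hspos htpos
    rw [le_div_iff₀ hstpos]
    linarith [key]
  have hd : d / (s * t) = d * a * b := by
    rw [hst, div_eq_mul_inv, inv_inv]; ring
  exact le_of_le_of_eq h4 hd

lemma abs_bilin_le {d : ℝ} (P : Matrix m n ℝ → Matrix m n ℝ → ℝ)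
    (hadd : ∀ U V W, P (U + V) W = P U W + P V W)
    (hsmul : ∀ (t : ℝ) V W, P (t • V) W = t * P V W)
    (hsymm : ∀ V W, P V W = P W V)
    (hbnd : ∀ W, |P W W| ≤ d * fnorm W ^ 2)
    (E W : Matrix m n ℝ) : |P E W| ≤ d * fnorm E * fnorm W := by
  rw [abs_le]
  constructor
  · have h := bilin_le P hadd hsmul hsymm hbnd (-E) W
    have hneg : -E = (-1 : ℝ) • E := by module
    rw [hneg, hsmul, fnorm_smul] at h
    rw [show |(-1 : ℝ)| = 1 by norm_num, one_mul] at h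
    linarith
  · exact bilin_le P hadd hsmul hsymm hbnd E W

end FrobeniusLemmas

/-- matrix form of the paper's appendix Lemma 12.
Variational lower bound on the factor gradient `∇f(X) R` under global two-sided
Hessian bounds. -/
theorem stmt_6 {n1 n2 r : ℕ}
    (f : Matrix (Fin n1) (Fin n2) ℝ → ℝ)
    (gradf : Matrix (Fin n1) (Fin n2) ℝ → Matrix (Fin n1) (Fin n2) ℝ)
    (μ L : ℝ) (hμ : 0 < μ) (hμL : μ ≤ L)
    (hf : ContDiff ℝ 2 f)
    (hgrad : ∀ X W : Matrix (Fin n1) (Fin n2) ℝ,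
      HasDerivAt (fun t : ℝ => f (X + t • W)) (finner (gradf X) W) 0)
    (hhess : ∀ X W : Matrix (Fin n1) (Fin n2) ℝ,
      μ * fnorm W ^ 2 ≤ iteratedFDeriv ℝ 2 f X ![W, W] ∧
        iteratedFDeriv ℝ 2 f X ![W, W] ≤ L * fnorm W ^ 2)
    (Xstar : Matrix (Fin n1) (Fin n2) ℝ) (hXstar : gradf Xstar = 0)
    (B : Matrix (Fin n1) (Fin r) ℝ) (R : Matrix (Fin n2) (Fin r) ℝ)
    (X : Matrix (Fin n1) (Fin n2) ℝ) (hX : X = B * Rᵀ)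
    (E : Matrix (Fin n1) (Fin n2) ℝ) (hE : E = X - Xstar)
    (ε : ℝ) (hε : ε = (L - μ) / (L + μ)) :
    ∀ O : Matrix (Fin n1) (Fin r) ℝ, fnorm O = 1 →
      finner (gradf X * R) O ≥
          (μ + L) / 2 * (finner E (O * Rᵀ) - ε * fnorm E * fnorm (O * Rᵀ)) ∧
        fnorm (gradf X * R) ≥
          (μ + L) / 2 * (finner E (O * Rᵀ) - ε * fnorm E * fnorm (O * Rᵀ)) := by
  intro O hO
  letI : NormedAddCommGroup (Matrix (Fin n1) (Fin n2) ℝ →L[ℝ] ℝ) :=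
    ContinuousLinearMap.toNormedAddCommGroup
  letI : NormedSpace ℝ (Matrix (Fin n1) (Fin n2) ℝ →L[ℝ] ℝ) :=
    ContinuousLinearMap.toNormedSpace
  have hdf : Differentiable ℝ f := hf.differentiable (by norm_num)
  have hcd1 : ContDiff ℝ 1 (fderiv ℝ f) := hf.fderiv_right (by norm_num)
  have hdf' : Differentiable ℝ (fderiv ℝ f) := hcd1.differentiable one_ne_zero
  -- gradient identification
  have grad_eq : ∀ Y W : Matrix (Fin n1) (Fin n2) ℝ,
      finner (gradf Y) W = fderiv ℝ f Y W := by
    intro Y W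
    have hpath : HasDerivAt (fun t : ℝ => Y + t • W) W 0 := by
      have hp := ((hasDerivAt_id (0:ℝ)).smul_const W).const_add Y; simp only [id, one_smul] at hp; exact hp
    have h2 : HasDerivAt (fun t : ℝ => f (Y + t • W)) (fderiv ℝ f Y W) 0 := by
      have := (hdf (Y + (0:ℝ) • W)).hasFDerivAt.comp_hasDerivAt 0 hpath
      rw [zero_smul, add_zero] at this; exact this
    exact (hgrad Y W).unique h2
  -- second derivative: symmetry and bounds
  have hsymm2 : ∀ (x V W : Matrix (Fin n1) (Fin n2) ℝ),
      fderiv ℝ (fderiv ℝ f) x V W = fderiv ℝ (fderiv ℝ f) x W V := fun x V W =>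
    second_derivative_symmetric (fun y => (hdf y).hasFDerivAt) ((hdf' x).hasFDerivAt) V W
  have hhess' : ∀ (x W : Matrix (Fin n1) (Fin n2) ℝ),
      μ * fnorm W ^ 2 ≤ fderiv ℝ (fderiv ℝ f) x W W ∧
      fderiv ℝ (fderiv ℝ f) x W W ≤ L * fnorm W ^ 2 := by
    intro x W
    have h := hhess x W
    have e : iteratedFDeriv ℝ 2 f x ![W, W] = fderiv ℝ (fderiv ℝ f) x W W := by
      rw [iteratedFDeriv_two_apply]
      simp; rfl
    rwa [e] at h
  set c : ℝ := (μ + L) / 2 with hc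
  set d : ℝ := (L - μ) / 2 with hd
  set W0 : Matrix (Fin n1) (Fin n2) ℝ := O * Rᵀ with hW0
  -- shifted Hessian bilinear form bound
  have hPbound : ∀ x : Matrix (Fin n1) (Fin n2) ℝ,
      |fderiv ℝ (fderiv ℝ f) x E W0 - c * finner E W0| ≤ d * fnorm E * fnorm W0 := by
    intro x
    have := abs_bilin_le (d := d) (fun V W => fderiv ℝ (fderiv ℝ f) x V W - c * finner V W)
      (fun U V W => by
        simp only [map_add, ContinuousLinearMap.add_apply, finner_add_left]; ring)
      (fun t V W => by
        simp only [_root_.map_smul, ContinuousLinearMap.smul_apply, finner_smul_left,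
          smul_eq_mul]; ring)
      (fun V W => by rw [hsymm2 x V W, finner_comm])
      (fun W => by
        have h1 := (hhess' x W).1
        have h2 := (hhess' x W).2
        have h3 : finner W W = fnorm W ^ 2 := (fnorm_sq W).symm
        rw [abs_le, h3, hc, hd]
        constructor <;> linarith)
      E W0
    exact this
  -- the function g and its derivative
  set g : ℝ → ℝ := fun t => fderiv ℝ f (Xstar + t • E) W0 with hgdef
  have hg : ∀ t : ℝ, HasDerivAt g
      (fderiv ℝ (fderiv ℝ f) (Xstar + t • E) E W0) t := by
    intro t
    have hpath : HasDerivAt (fun t : ℝ => Xstar + t • E) E t := by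
      have hp := ((hasDerivAt_id t).smul_const E).const_add Xstar; simp only [id, one_smul] at hp; exact hp
    have h1 : HasDerivAt (fun t : ℝ => fderiv ℝ f (Xstar + t • E))
        (fderiv ℝ (fderiv ℝ f) (Xstar + t • E) E) t :=
      (hdf' _).hasFDerivAt.comp_hasDerivAt t hpath
    have h2 := (ContinuousLinearMap.apply ℝ ℝ W0).hasFDerivAt.comp_hasDerivAt t h1
    exact h2
  set m0 : ℝ := c * finner E W0 - d * fnorm E * fnorm W0 with hm0
  have hgd : ∀ t : ℝ, m0 ≤ fderiv ℝ (fderiv ℝ f) (Xstar + t • E) E W0 := by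
    intro t
    have := neg_le_of_abs_le (hPbound (Xstar + t • E))
    rw [hm0]; linarith
  -- mean value: g 1 - g 0 ≥ m0
  set h : ℝ → ℝ := fun t => g t - m0 * t with hhdef
  have hh : ∀ t : ℝ, HasDerivAt h
      (fderiv ℝ (fderiv ℝ f) (Xstar + t • E) E W0 - m0) t := by
    intro t
    have hlin : HasDerivAt (fun t : ℝ => m0 * t) m0 t := by
      simpa using (hasDerivAt_id t).const_mul m0
    exact (hg t).sub hlin
  have hmono : Monotone h := by
    apply monotone_of_deriv_nonneg
    · exact fun t => ((hh t).differentiableAt)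
    · intro t
      rw [(hh t).deriv]
      linarith [hgd t]
  have hmv : m0 ≤ g 1 - g 0 := by
    have h01 : g 0 - m0 * 0 ≤ g 1 - m0 * 1 := hmono zero_le_one
    linarith
  have hg0 : g 0 = 0 := by
    have hx0 : Xstar + (0:ℝ) • E = Xstar := by simp
    show fderiv ℝ f (Xstar + (0:ℝ) • E) W0 = 0
    rw [hx0, ← grad_eq, hXstar, finner_zero_left]
  have hg1 : g 1 = finner (gradf X) W0 := by
    have hx1 : Xstar + (1:ℝ) • E = X := by rw [hE]; module
    show fderiv ℝ f (Xstar + (1:ℝ) • E) W0 = _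
    rw [hx1, ← grad_eq]
  have hkey : finner (gradf X) W0 ≥ m0 := by rw [← hg1]; linarith
  -- translate m0 to the target form
  have hLμ : (0:ℝ) < L + μ := by linarith
  have hde : d = c * ε := by
    rw [hc, hd, hε]
    field_simp
    ring
  have htarget : m0 = c * (finner E W0 - ε * fnorm E * fnorm W0) := by
    rw [hm0, hde]; ring
  have hmain : finner (gradf X * R) O ≥ c * (finner E W0 - ε * fnorm E * fnorm W0) := by
    rw [finner_mul_right, ← hW0, ← htarget]
    exact hkey
  refine ⟨hmain, ?_⟩
  have hcs : finner (gradf X * R) O ≤ fnorm (gradf X * R) * fnorm O :=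
    finner_le_fnorm_mul_fnorm _ _
  rw [hO, mul_one] at hcs
  linarith
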